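/- Consider the workflow net N_c with places {i, p, r, f} and transitions t_i (consumes 1 from i, produces c+1 in p), t_r (consumes c from p, produces 1 in r), and t_f (consumes 1 from p and 1 from r, produces 1 in f), where arc weights are allowed. Then N_c is k-sound for every k ∈ [1..c−1] but not c-sound. -/

import Mathlib

structure PetriNet (P T : Type) [Fintype P] [Fintype T] where
  pre : T → P → ℕ
  post : T → P → ℕ

variable {P T : Type} [Fintype P] [Fintype T] [DecidableEq P]

namespace PetriNet

def enabled (N : PetriNet P T) (t : T) (m : P → ℕ) : Prop := ∀ p, N.pre t p ≤ m p

def fires (N : PetriNet P T) (m m' : P → ℕ) : Prop :=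
  ∃ t, N.enabled t m ∧ ∀ p, m' p = m p + N.post t p - N.pre t p

def reach (N : PetriNet P T) : (P → ℕ) → (P → ℕ) → Prop := Relation.ReflTransGen N.fires

def zfires (N : PetriNet P T) (m m' : P → ℤ) : Prop :=
  ∃ t, ∀ p, m' p = m p + (N.post t p : ℤ) - (N.pre t p : ℤ)

def zreach (N : PetriNet P T) : (P → ℤ) → (P → ℤ) → Prop := Relation.ReflTransGen N.zfires

def cfires (N : PetriNet P T) (m m' : P → ℚ) : Prop :=
  ∃ t, ∃ l : ℚ, 0 < l ∧ l ≤ 1 ∧ (∀ p, l * (N.pre t p : ℚ) ≤ m p) ∧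
    ∀ p, m' p = m p + l * ((N.post t p : ℚ) - (N.pre t p : ℚ))

def creach (N : PetriNet P T) : (P → ℚ) → (P → ℚ) → Prop := Relation.ReflTransGen N.cfires

def bounded (N : PetriNet P T) (m : P → ℕ) : Prop :=
  ∃ b : ℕ, ∀ m', N.reach m m' → ∀ p, m' p ≤ b

def zbounded (N : PetriNet P T) (m : P → ℕ) : Prop :=
  ∃ b : ℕ, ∀ m' : P → ℤ, N.zreach (fun p => (m p : ℤ)) m' → (∀ p, 0 ≤ m' p) →
    ∀ p, m' p ≤ (b : ℤ)

def quasiLive (N : PetriNet P T) (m : P → ℕ) (t : T) : Prop :=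
  ∃ m', N.reach m m' ∧ N.enabled t m'

def live (N : PetriNet P T) (m : P → ℕ) (t : T) : Prop :=
  ∀ m', N.reach m m' → N.quasiLive m' t

def freeChoice (N : PetriNet P T) : Prop :=
  ∀ s t : T, (∀ p, N.pre s p = 0 ∨ N.pre t p = 0) ∨ N.pre s = N.pre t

def edge (N : PetriNet P T) : (P ⊕ T) → (P ⊕ T) → Prop
  | Sum.inl p, Sum.inr t => 0 < N.pre t p
  | Sum.inr t, Sum.inl p => 0 < N.post t p
  | _, _ => False

end PetriNet

/-- The marking with `k` tokens in place `p` and none elsewhere. -/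
def mk1 (p : P) (k : ℕ) : P → ℕ := fun q => if q = p then k else 0

/-- The continuous marking with `k` tokens in place `p` and none elsewhere. -/
def mkQ (p : P) (k : ℚ) : P → ℚ := fun q => if q = p then k else 0

/-- `k`-soundness of a Petri net with designated initial and final places. -/
def ksoundAt (N : PetriNet P T) (i f : P) (k : ℕ) : Prop :=
  ∀ m, N.reach (mk1 i k) m → N.reach m (mk1 f k)

inductive Pl13 | i | p | r | f
deriving DecidableEq

instance instFintypePl13 : Fintype Pl13 :=
  ⟨{.i, .p, .r, .f}, fun x => by cases x <;> simp⟩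

inductive Tr13 | ti | tr | tf
deriving DecidableEq

instance instFintypeTr13 : Fintype Tr13 :=
  ⟨{.ti, .tr, .tf}, fun x => by cases x <;> simp⟩

def N13 (c : ℕ) : PetriNet Pl13 Tr13 where
  pre := fun t q => match t, q with
    | .ti, .i => 1
    | .tr, .p => c
    | .tf, .p => 1
    | .tf, .r => 1
    | _, _ => 0
  post := fun t q => match t, q with
    | .ti, .p => c + 1
    | .tr, .r => 1
    | .tf, .f => 1
    | _, _ => 0

namespace Aux13

def mark (a b d e : ℕ) : Pl13 → ℕ
  | .i => a | .p => b | .r => d | .f => e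

lemma mk1_i (k : ℕ) : mk1 Pl13.i k = mark k 0 0 0 := by
  funext q; cases q <;> simp [mk1, mark]

lemma mk1_f (k : ℕ) : mk1 Pl13.f k = mark 0 0 0 k := by
  funext q; cases q <;> simp [mk1, mark]

lemma mark_eq (m : Pl13 → ℕ) : m = mark (m Pl13.i) (m Pl13.p) (m Pl13.r) (m Pl13.f) := by
  funext q; cases q <;> rfl

variable {c : ℕ}

lemma fire_ti {a b d e : ℕ} (h : 1 ≤ a) :
    (N13 c).fires (mark a b d e) (mark (a-1) (b+(c+1)) d e) := by
  refine ⟨.ti, fun q => ?_, fun q => ?_⟩ <;>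
    cases q <;> simp [N13, PetriNet.enabled, mark] <;> omega

lemma fire_tr {b d e : ℕ} (h : c ≤ b) :
    (N13 c).fires (mark 0 b d e) (mark 0 (b-c) (d+1) e) := by
  refine ⟨.tr, fun q => ?_, fun q => ?_⟩ <;>
    cases q <;> simp [N13, PetriNet.enabled, mark] <;> omega

lemma fire_tf {b d e : ℕ} (hb : 1 ≤ b) (hd : 1 ≤ d) :
    (N13 c).fires (mark 0 b d e) (mark 0 (b-1) (d-1) (e+1)) := by
  refine ⟨.tf, fun q => ?_, fun q => ?_⟩ <;>
    cases q <;> simp [N13, PetriNet.enabled, mark] <;> omega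

def Inv (c k : ℕ) (m : Pl13 → ℕ) : Prop :=
  (c+1)*(m Pl13.i) + m Pl13.p + c*(m Pl13.r) + (c+1)*(m Pl13.f) = (c+1)*k

lemma inv_step {k : ℕ} {m m' : Pl13 → ℕ} (h : (N13 c).fires m m')
    (hm : Inv c k m) : Inv c k m' := by
  obtain ⟨t, hen, heq⟩ := h
  unfold Inv at *
  cases t <;>
  · have h1 := hen Pl13.i; have h2 := hen Pl13.p
    have h3 := hen Pl13.r; have h4 := hen Pl13.f
    have e1 := heq Pl13.i; have e2 := heq Pl13.p
    have e3 := heq Pl13.r; have e4 := heq Pl13.f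
    simp [N13] at h1 h2 h3 h4 e1 e2 e3 e4
    rw [e1, e2, e3, e4]
    zify [h1, h2, h3, h4] at hm ⊢
    linarith [hm]

lemma inv_reach {k : ℕ} {m : Pl13 → ℕ} (h : (N13 c).reach (mk1 Pl13.i k) m) :
    Inv c k m := by
  induction h with
  | refl =>
      unfold Inv; rw [mk1_i]; simp [mark]
  | tail _ hstep ih => exact inv_step hstep ih

lemma reach_final {k : ℕ} (hc : 1 ≤ c) (hk : k < c) :
    ∀ μ (m : Pl13 → ℕ), m Pl13.i + m Pl13.r + 2*(k - m Pl13.f) ≤ μ →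
      Inv c k m → (N13 c).reach m (mk1 Pl13.f k) := by
  intro μ
  induction μ with
  | zero =>
      intro m hμ hI
      have hI' := hI
      unfold Inv at hI'
      have ha : m Pl13.i = 0 := by omega
      have hd : m Pl13.r = 0 := by omega
      have he : k ≤ m Pl13.f := by omega
      rw [ha, hd] at hI'
      have hef : m Pl13.f = k := by nlinarith
      have hb : m Pl13.p = 0 := by nlinarith
      have : m = mk1 Pl13.f k := by
        rw [mk1_f, mark_eq m, ha, hd, hb, hef]
      rw [this]
      exact Relation.ReflTransGen.refl
  | succ μ ih =>
      intro m hμ hI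
      have hIe := hI; unfold Inv at hIe
      rw [mark_eq m]
      set a := m Pl13.i with ha
      set b := m Pl13.p with hb
      set d := m Pl13.r with hd
      set e := m Pl13.f with he
      have hek : e ≤ k := by nlinarith
      rcases Nat.eq_zero_or_pos a with h0 | hpos
      · -- a = 0
        rw [h0] at hIe ⊢
        have hbd : b + c*d = (c+1)*(k-e) := by
          have : (c+1)*k = (c+1)*(k-e) + (c+1)*e := by
            rw [← Nat.mul_add]; congr 1; omega
          omega
        set n := k - e with hn
        rcases Nat.eq_zero_or_pos d with hd0 | hdpos
        · -- d = 0
          rw [hd0] at hbd ⊢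
          simp at hbd
          rcases Nat.eq_zero_or_pos n with hn0 | hnpos
          · have hbz : b = 0 := by rw [hn0] at hbd; simpa using hbd
            have hek' : e = k := by omega
            rw [hbz, hek', mk1_f]
            exact Relation.ReflTransGen.refl
          · -- fire tr then tf
            have hbc : c + 1 ≤ b := by
              rw [hbd]; calc c + 1 = (c+1)*1 := by ring
                _ ≤ (c+1)*n := by exact Nat.mul_le_mul_left _ hnpos
            refine Relation.ReflTransGen.head (fire_tr (by omega)) ?_
            refine Relation.ReflTransGen.head (fire_tf (by omega) (by omega)) ?_
            have := ih (mark 0 (b-c-1) (1-1) (e+1)) ?_ ?_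
            · simpa [mark, PetriNet.reach] using this
            · simp [mark]; omega
            · unfold Inv
              simp [mark]
              have hbe : b - c - 1 = (c+1)*(n-1) := by
                have : (c+1)*n = (c+1)*(n-1) + (c+1) := by
                  rw [← Nat.mul_add_one]; congr 1; omega
                omega
              have : (c+1)*(e+1) = (c+1)*e + (c+1) := by ring
              have hkk : (c+1)*k = (c+1)*(n-1) + (c+1)*(e+1) := by
                have : (c+1)*k = (c+1)*((n-1) + (e+1)) := by congr 1; omega
                rw [this, Nat.mul_add]
              omega
        · -- d ≥ 1 : fire tf
          have hnc : n < c := by omega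
          have hdn : d ≤ n := by
            by_contra hcon
            push_neg at hcon
            have : c*(n+1) ≤ c*d := Nat.mul_le_mul_left _ hcon
            nlinarith
          have hbge : d ≤ b := by nlinarith [Nat.mul_le_mul_left c hdn]
          refine Relation.ReflTransGen.head (fire_tf (by omega) hdpos) ?_
          refine ih _ ?_ ?_
          · simp [mark]; omega
          · unfold Inv
            simp [mark]
            have h1 : c*(d-1) + c = c*d := by
              rw [← Nat.mul_add_one]; congr 1; omega
            have h2 : (c+1)*(e+1) = (c+1)*e + (c+1) := by ring
            omega
      · -- a ≥ 1 : fire ti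
        refine Relation.ReflTransGen.head (fire_ti hpos) ?_
        refine ih _ ?_ ?_
        · simp [mark]; omega
        · unfold Inv
          simp [mark]
          have h1 : (c+1)*(a-1) + (c+1) = (c+1)*a := by
            rw [← Nat.mul_add_one]; congr 1; omega
          omega

lemma multi_ti {d e : ℕ} : ∀ a b, (N13 c).reach (mark a b d e) (mark 0 (b + a*(c+1)) d e) := by
  intro a
  induction a with
  | zero =>
      intro b
      have : b + 0*(c+1) = b := by ring
      rw [this]
      exact Relation.ReflTransGen.refl
  | succ a ih =>
      intro b
      refine Relation.ReflTransGen.head (fire_ti (by omega)) ?_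
      have := ih (b + (c+1))
      have he : b + (c+1) + a*(c+1) = b + (a+1)*(c+1) := by ring
      simpa [he, PetriNet.reach] using this

lemma multi_tr {e : ℕ} : ∀ j b d, j*c ≤ b →
    (N13 c).reach (mark 0 b d e) (mark 0 (b - j*c) (d+j) e) := by
  intro j
  induction j with
  | zero =>
      intro b d _
      have h1 : b - 0*c = b := by simp
      have h2 : d + 0 = d := rfl
      rw [h1, h2]
      exact Relation.ReflTransGen.refl
  | succ j ih =>
      intro b d h
      have hjc : j*c + c ≤ b := by
        calc j*c + c = (j+1)*c := by ring
          _ ≤ b := h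
      have hc : c ≤ b := le_trans (Nat.le_add_left c (j*c)) hjc
      refine Relation.ReflTransGen.head (fire_tr hc) ?_
      have := ih (b - c) (d+1) (Nat.le_sub_of_add_le hjc)
      have h1 : b - c - j*c = b - (j+1)*c := by
        rw [Nat.sub_sub]
        congr 1
        ring
      have h2 : d + 1 + j = d + (j+1) := by ring
      rw [← h1, ← h2]
      exact this

end Aux13

theorem stmt13 (c : ℕ) (hc : 1 ≤ c) :
    (∀ k : ℕ, 1 ≤ k → k ≤ c - 1 → ksoundAt (N13 c) Pl13.i Pl13.f k) ∧
    ¬ ksoundAt (N13 c) Pl13.i Pl13.f c := by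
  constructor
  · intro k hk1 hk2 m hm
    exact Aux13.reach_final hc (by omega) _ m le_rfl (Aux13.inv_reach hm)
  · intro hs
    have hdead : (N13 c).reach (mk1 Pl13.i c) (Aux13.mark 0 0 (c+1) 0) := by
      rw [Aux13.mk1_i]
      have h1 := Aux13.multi_ti (c := c) (d := 0) (e := 0) c 0
      have h2 := Aux13.multi_tr (c := c) (e := 0) (c+1) (0 + c*(c+1)) 0 (by nlinarith)
      have h3 : 0 + c*(c+1) - (c+1)*c = 0 := by
        have : (c+1)*c = c*(c+1) := by ring
        omega
      rw [h3] at h2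
      simpa [PetriNet.reach] using h1.trans h2
    have := hs _ hdead
    rcases Relation.ReflTransGen.cases_head this with heq | ⟨m', hstep, _⟩
    · have := congrFun heq Pl13.r
      simp [Aux13.mark, mk1] at this
    · obtain ⟨t, hen, _⟩ := hstep
      cases t
      · have := hen Pl13.i; simp [N13, Aux13.mark] at this
      · have := hen Pl13.p; simp [N13, Aux13.mark] at this; omega
      · have := hen Pl13.p; simp [N13, Aux13.mark] at this
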